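/- Let b > 0 and let V be a nonnegative integrable function on (b,b+1) with ∫_b^{b+1} V(r) dr ≤ 3. Then for every continuously differentiable function u : [b,b+1] → ℝ satisfying ∫_b^{b+1} u(r)·√r dr = 0, one has ∫_b^{b+1} V(r)·u(r)² dr ≤ ∫_b^{b+1} ( (d/dr)( u(r)·r^{−1/2} ) )² · r dr. -/

import Mathlib

open MeasureTheory Set intervalIntegral

noncomputable def qB (b : ℝ) : ℝ := -(4*b+2)
noncomputable def qC (b : ℝ) : ℝ := 6*b^2+6*b+11/8
noncomputable def qD (b : ℝ) : ℝ := (b^2+b+3/16)^2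
noncomputable def qE (b : ℝ) : ℝ := 2*(b^2+b+3/16)*(2*b+1)
noncomputable def qq (b τ : ℝ) : ℝ := (τ^2 + qB b*τ + qC b + qD b/τ^2)/qE b
noncomputable def Phi (b c y : ℝ) : ℝ :=
  (y^7/7 + qB b*y^6/6 + (qC b-2*c^2)*y^5/5 - 2*c^2*qB b*y^4/4
   + (c^4-2*c^2*qC b+qD b)*y^3/3 + c^4*qB b*y^2/2 + (c^4*qC b-2*c^2*qD b)*y
   - c^4*qD b*y⁻¹)/(4*qE b)

lemma qE_pos {b : ℝ} (hb : 0 < b) : 0 < qE b := by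
  unfold qE; nlinarith

set_option maxHeartbeats 1000000 in
lemma key_poly {b t : ℝ} (hb : 0 < b) (h1 : b ≤ t) (h2 : t ≤ b+1) :
    Phi b b t - Phi b b b + (Phi b (b+1) (b+1) - Phi b (b+1) t) ≤ (b+1/2)^2/(3*t) := by
  have hx : (0:ℝ) ≤ t - b := by linarith
  have hy : (0:ℝ) ≤ b+1-t := by linarith
  have hb0 : (0:ℝ) ≤ b := hb.le
  have ht : (0:ℝ) < t := by linarith
  have hE : (0:ℝ) < qE b := qE_pos hb
  have hb1 : (0:ℝ) < b+1 := by linarith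
  have ht0 : t ≠ 0 := ne_of_gt ht
  have hb0' : b ≠ 0 := ne_of_gt hb
  have hb10 : (b+1:ℝ) ≠ 0 := ne_of_gt hb1
  have hE0 : qE b ≠ 0 := ne_of_gt hE
  have hQ : Phi b b t - Phi b b b + (Phi b (b+1) (b+1) - Phi b (b+1) t)
      = (((t^7/7 + qB b*t^6/6 + (qC b-2*b^2)*t^5/5 - 2*b^2*qB b*t^4/4 + (b^4-2*b^2*qC b+qD b)*t^3/3 + b^4*qB b*t^2/2 + (b^4*qC b-2*b^2*qD b)*t) - (b^7/7 + qB b*b^6/6 + (qC b-2*b^2)*b^5/5 - 2*b^2*qB b*b^4/4 + (b^4-2*b^2*qC b+qD b)*b^3/3 + b^4*qB b*b^2/2 + (b^4*qC b-2*b^2*qD b)*b) + b^3*qD b + ((b+1)^7/7 + qB b*(b+1)^6/6 + (qC b-2*(b+1)^2)*(b+1)^5/5 - 2*(b+1)^2*qB b*(b+1)^4/4 + ((b+1)^4-2*(b+1)^2*qC b+qD b)*(b+1)^3/3 + (b+1)^4*qB b*(b+1)^2/2 + ((b+1)^4*qC b-2*(b+1)^2*qD b)*(b+1)) - (b+1)^3*qD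 b - (t^7/7 + qB b*t^6/6 + (qC b-2*(b+1)^2)*t^5/5 - 2*(b+1)^2*qB b*t^4/4 + ((b+1)^4-2*(b+1)^2*qC b+qD b)*t^3/3 + (b+1)^4*qB b*t^2/2 + ((b+1)^4*qC b-2*(b+1)^2*qD b)*t)) + (((b+1)^4 - b^4)*qD b)*t⁻¹)/(4*qE b) := by
    unfold Phi
    rw [div_sub_div_same, div_sub_div_same, ← add_div]
    congr 1
    field_simp
    ring
  rw [hQ]
  set n : ℝ := (t^7/7 + qB b*t^6/6 + (qC b-2*b^2)*t^5/5 - 2*b^2*qB b*t^4/4 + (b^4-2*b^2*qC b+qD b)*t^3/3 + b^4*qB b*t^2/2 + (b^4*qC b-2*b^2*qD b)*t) - (b^7/7 + qB b*b^6/6 + (qC b-2*b^2)*b^5/5 - 2*b^2*qB b*b^4/4 + (b^4-2*b^2*qC b+qD b)*b^3/3 + b^4*qB b*b^2/2 + (b^4*qC b-2*b^2*qD b)*b) + b^3*qD b + ((b+1)^7/7 + qB b*(b+1)^6/6 + (qC b-2*(b+1)^2)*(b+1)^5/5 - 2*(b+1)^2*qB b*(b+1)^4/4 + ((b+1)^4-2*(b+1)^2*qC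 b+qD b)*(b+1)^3/3 + (b+1)^4*qB b*(b+1)^2/2 + ((b+1)^4*qC b-2*(b+1)^2*qD b)*(b+1)) - (b+1)^3*qD b - (t^7/7 + qB b*t^6/6 + (qC b-2*(b+1)^2)*t^5/5 - 2*(b+1)^2*qB b*t^4/4 + ((b+1)^4-2*(b+1)^2*qC b+qD b)*t^3/3 + (b+1)^4*qB b*t^2/2 + ((b+1)^4*qC b-2*(b+1)^2*qD b)*t) with hn
  set k : ℝ := ((b+1)^4 - b^4)*qD b with hk
  rw [div_le_div_iff₀ (by positivity) (by positivity : (0:ℝ) < 3*t)]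
  have hclear : (n + k*t⁻¹)*(3*t) = 3*t*n + 3*k := by
    field_simp
  rw [hclear]
  have hid : (b+1/2)^2*(4*qE b) - (3*t*n + 3*k) = (t-b)^0*(b+1-t)^6*((69/256) + (697/448)*b^1 + (14/5)*b^2 + (8/5)*b^3) + (t-b)^1*(b+1-t)^5*((421/896) + (15247/2240)*b^1 + (349/10)*b^2 + (433/5)*b^3 + 104*b^4 + 48*b^5) + (t-b)^2*(b+1-t)^4*((3979/1792) + (15019/448)*b^1 + 170*b^2 + 400*b^3 + 448*b^4 + 192*b^5) + (t-b)^3*(b+1-t)^3*((2945/448) + (16161/224)*b^1 + 321*b^2 + 694*b^3 + 720*b^4 + 288*b^5) + (t-b)^4*(b+1-t)^2*((9505/1792) + (27563/448)*b^1 + 262*b^2 + 528*b^3 + 512*b^4 + 192*b^5) + (t-b)^5*(b+1-t)^1*((1825/896) + (46607/2240)*b^1 + (809/10)*b^2 + (753/5)*b^3 + 136*b^4 + 48*b^5) + (t-b)^6*(b+1-t)^0*((773/8960) + (1693/2240)*b^1 + 2*b^2 + (8/5)*b^3 + 0*b^4 + 0*b^5) := by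
    rw [hn, hk]; unfold qB qC qD qE; ring
  have hterm0 : (0:ℝ) ≤ (t-b)^0*(b+1-t)^6*((69/256) + (697/448)*b^1 + (14/5)*b^2 + (8/5)*b^3) :=
    mul_nonneg (mul_nonneg (pow_nonneg hx 0) (pow_nonneg hy 6))
      (add_nonneg (add_nonneg (add_nonneg (by norm_num : (0:ℝ) ≤ ((69/256))) (mul_nonneg (by norm_num : (0:ℝ) ≤ (697/448)) (pow_nonneg hb0 1))) (mul_nonneg (by norm_num : (0:ℝ) ≤ (14/5)) (pow_nonneg hb0 2))) (mul_nonneg (by norm_num : (0:ℝ) ≤ (8/5)) (pow_nonneg hb0 3)))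
  have hterm1 : (0:ℝ) ≤ (t-b)^1*(b+1-t)^5*((421/896) + (15247/2240)*b^1 + (349/10)*b^2 + (433/5)*b^3 + 104*b^4 + 48*b^5) :=
    mul_nonneg (mul_nonneg (pow_nonneg hx 1) (pow_nonneg hy 5))
      (add_nonneg (add_nonneg (add_nonneg (add_nonneg (add_nonneg (by norm_num : (0:ℝ) ≤ ((421/896))) (mul_nonneg (by norm_num : (0:ℝ) ≤ (15247/2240)) (pow_nonneg hb0 1))) (mul_nonneg (by norm_num : (0:ℝ) ≤ (349/10)) (pow_nonneg hb0 2))) (mul_nonneg (by norm_num : (0:ℝ) ≤ (433/5)) (pow_nonneg hb0 3))) (mul_nonneg (by norm_num : (0:ℝ) ≤ (104)) (pow_nonneg hb0 4))) (mul_nonneg (by norm_num : (0:ℝ) ≤ (48)) (pow_nonneg hb0 5)))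
  have hterm2 : (0:ℝ) ≤ (t-b)^2*(b+1-t)^4*((3979/1792) + (15019/448)*b^1 + 170*b^2 + 400*b^3 + 448*b^4 + 192*b^5) :=
    mul_nonneg (mul_nonneg (pow_nonneg hx 2) (pow_nonneg hy 4))
      (add_nonneg (add_nonneg (add_nonneg (add_nonneg (add_nonneg (by norm_num : (0:ℝ) ≤ ((3979/1792))) (mul_nonneg (by norm_num : (0:ℝ) ≤ (15019/448)) (pow_nonneg hb0 1))) (mul_nonneg (by norm_num : (0:ℝ) ≤ (170)) (pow_nonneg hb0 2))) (mul_nonneg (by norm_num : (0:ℝ) ≤ (400)) (pow_nonneg hb0 3))) (mul_nonneg (by norm_num : (0:ℝ) ≤ (448)) (pow_nonneg hb0 4))) (mul_nonneg (by norm_num : (0:ℝ) ≤ (192)) (pow_nonneg hb0 5)))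
  have hterm3 : (0:ℝ) ≤ (t-b)^3*(b+1-t)^3*((2945/448) + (16161/224)*b^1 + 321*b^2 + 694*b^3 + 720*b^4 + 288*b^5) :=
    mul_nonneg (mul_nonneg (pow_nonneg hx 3) (pow_nonneg hy 3))
      (add_nonneg (add_nonneg (add_nonneg (add_nonneg (add_nonneg (by norm_num : (0:ℝ) ≤ ((2945/448))) (mul_nonneg (by norm_num : (0:ℝ) ≤ (16161/224)) (pow_nonneg hb0 1))) (mul_nonneg (by norm_num : (0:ℝ) ≤ (321)) (pow_nonneg hb0 2))) (mul_nonneg (by norm_num : (0:ℝ) ≤ (694)) (pow_nonneg hb0 3))) (mul_nonneg (by norm_num : (0:ℝ) ≤ (720)) (pow_nonneg hb0 4))) (mul_nonneg (by norm_num : (0:ℝ) ≤ (288)) (pow_nonneg hb0 5)))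
  have hterm4 : (0:ℝ) ≤ (t-b)^4*(b+1-t)^2*((9505/1792) + (27563/448)*b^1 + 262*b^2 + 528*b^3 + 512*b^4 + 192*b^5) :=
    mul_nonneg (mul_nonneg (pow_nonneg hx 4) (pow_nonneg hy 2))
      (add_nonneg (add_nonneg (add_nonneg (add_nonneg (add_nonneg (by norm_num : (0:ℝ) ≤ ((9505/1792))) (mul_nonneg (by norm_num : (0:ℝ) ≤ (27563/448)) (pow_nonneg hb0 1))) (mul_nonneg (by norm_num : (0:ℝ) ≤ (262)) (pow_nonneg hb0 2))) (mul_nonneg (by norm_num : (0:ℝ) ≤ (528)) (pow_nonneg hb0 3))) (mul_nonneg (by norm_num : (0:ℝ) ≤ (512)) (pow_nonneg hb0 4))) (mul_nonneg (by norm_num : (0:ℝ) ≤ (192)) (pow_nonneg hb0 5)))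
  have hterm5 : (0:ℝ) ≤ (t-b)^5*(b+1-t)^1*((1825/896) + (46607/2240)*b^1 + (809/10)*b^2 + (753/5)*b^3 + 136*b^4 + 48*b^5) :=
    mul_nonneg (mul_nonneg (pow_nonneg hx 5) (pow_nonneg hy 1))
      (add_nonneg (add_nonneg (add_nonneg (add_nonneg (add_nonneg (by norm_num : (0:ℝ) ≤ ((1825/896))) (mul_nonneg (by norm_num : (0:ℝ) ≤ (46607/2240)) (pow_nonneg hb0 1))) (mul_nonneg (by norm_num : (0:ℝ) ≤ (809/10)) (pow_nonneg hb0 2))) (mul_nonneg (by norm_num : (0:ℝ) ≤ (753/5)) (pow_nonneg hb0 3))) (mul_nonneg (by norm_num : (0:ℝ) ≤ (136)) (pow_nonneg hb0 4))) (mul_nonneg (by norm_num : (0:ℝ) ≤ (48)) (pow_nonneg hb0 5)))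
  have hterm6 : (0:ℝ) ≤ (t-b)^6*(b+1-t)^0*((773/8960) + (1693/2240)*b^1 + 2*b^2 + (8/5)*b^3 + 0*b^4 + 0*b^5) :=
    mul_nonneg (mul_nonneg (pow_nonneg hx 6) (pow_nonneg hy 0))
      (add_nonneg (add_nonneg (add_nonneg (add_nonneg (add_nonneg (by norm_num : (0:ℝ) ≤ ((773/8960))) (mul_nonneg (by norm_num : (0:ℝ) ≤ (1693/2240)) (pow_nonneg hb0 1))) (mul_nonneg (by norm_num : (0:ℝ) ≤ (2)) (pow_nonneg hb0 2))) (mul_nonneg (by norm_num : (0:ℝ) ≤ (8/5)) (pow_nonneg hb0 3))) (mul_nonneg (by norm_num : (0:ℝ) ≤ (0)) (pow_nonneg hb0 4))) (mul_nonneg (by norm_num : (0:ℝ) ≤ (0)) (pow_nonneg hb0 5)))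
  linarith [hid, hterm0, hterm1, hterm2, hterm3, hterm4, hterm5, hterm6]

lemma one_div_le_qq {b τ : ℝ} (hb : 0 < b) (hτ : 0 < τ) : 1/τ ≤ qq b τ := by
  have hE : 0 < qE b := qE_pos hb
  rw [← sub_nonneg]
  have hτ0 : τ ≠ 0 := ne_of_gt hτ
  have hE0 : qE b ≠ 0 := ne_of_gt hE
  have hkey : qq b τ - 1/τ = ((τ-(b+1/4))^2*(τ-(b+3/4))^2)/(qE b*τ^2) := by
    unfold qq qB qC qD qE
    field_simp
    ring
  rw [hkey]
  positivity

lemma qq_nonneg {b τ : ℝ} (hb : 0 < b) (hτ : 0 < τ) : 0 ≤ qq b τ :=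
  le_trans (le_of_lt (by positivity : (0:ℝ) < 1/τ)) (one_div_le_qq hb hτ)

lemma contOn_qq_integrand {b c t1 t2 : ℝ} (h : ∀ τ ∈ Icc t1 t2, (0:ℝ) < τ) :
    ContinuousOn (fun τ : ℝ => ((τ^2-c^2)/2)^2 * qq b τ) (Icc t1 t2) := by
  apply ContinuousOn.mul (by fun_prop)
  unfold qq
  apply ContinuousOn.div_const
  apply ContinuousOn.add (by fun_prop)
  exact ContinuousOn.div (by fun_prop) (by fun_prop)
    (fun x hx => pow_ne_zero 2 (ne_of_gt (h x hx)))

set_option maxHeartbeats 1000000 in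
lemma integral_qq_eval {b c t1 t2 : ℝ} (hb : 0 < b) (h1 : 0 < t1) (h12 : t1 ≤ t2) :
    ∫ τ in t1..t2, ((τ^2-c^2)/2)^2 * qq b τ = Phi b c t2 - Phi b c t1 := by
  have hE : 0 < qE b := qE_pos hb
  have hE0 : qE b ≠ 0 := ne_of_gt hE
  apply intervalIntegral.integral_eq_sub_of_hasDerivAt
  · intro y hy
    rw [uIcc_of_le h12] at hy
    have hy0 : y ≠ 0 := ne_of_gt (lt_of_lt_of_le h1 hy.1)
    have hchain :=
      ((((((((hasDerivAt_pow 7 y).div_const 7).add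
        (((hasDerivAt_pow 6 y).const_mul (qB b)).div_const 6)).add
        (((hasDerivAt_pow 5 y).const_mul (qC b-2*c^2)).div_const 5)).sub
        (((hasDerivAt_pow 4 y).const_mul (2*c^2*qB b)).div_const 4)).add
        (((hasDerivAt_pow 3 y).const_mul (c^4-2*c^2*qC b+qD b)).div_const 3)).add
        (((hasDerivAt_pow 2 y).const_mul (c^4*qB b)).div_const 2)).add
        (HasDerivAt.const_mul (c^4*qC b-2*c^2*qD b) (hasDerivAt_id' (x := y)))).sub
        ((hasDerivAt_inv hy0).const_mul (c^4*qD b))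
    have h2 := hchain.div_const (4*qE b)
    have hfun : (fun y : ℝ => (y^7/7 + qB b*y^6/6 + (qC b-2*c^2)*y^5/5 - 2*c^2*qB b*y^4/4
        + (c^4-2*c^2*qC b+qD b)*y^3/3 + c^4*qB b*y^2/2 + (c^4*qC b-2*c^2*qD b)*y
        - c^4*qD b*y⁻¹)/(4*qE b)) = Phi b c := by
      funext z; rw [Phi]
    have h2 : HasDerivAt (Phi b c) _ y := h2
    refine h2.congr_deriv ?_
    unfold qq
    have hy2 : (y:ℝ)^2 ≠ 0 := pow_ne_zero 2 hy0
    field_simp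
    ring
  · apply ContinuousOn.intervalIntegrable
    rw [uIcc_of_le h12]
    exact contOn_qq_integrand (fun τ hτ => lt_of_lt_of_le h1 hτ.1)

lemma cs_integral {c d : ℝ} (hcd : c ≤ d) {f h : ℝ → ℝ}
    (hf : ContinuousOn f (Icc c d)) (hh : ContinuousOn h (Icc c d)) :
    (∫ τ in c..d, f τ * h τ)^2 ≤ (∫ τ in c..d, (f τ)^2) * (∫ τ in c..d, (h τ)^2) := by
  have hf' : ContinuousOn f (uIcc c d) := by rw [uIcc_of_le hcd]; exact hf
  have hh' : ContinuousOn h (uIcc c d) := by rw [uIcc_of_le hcd]; exact hh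
  have hif : IntervalIntegrable (fun τ => (f τ)^2) volume c d := (hf'.pow 2).intervalIntegrable
  have hih : IntervalIntegrable (fun τ => (h τ)^2) volume c d := (hh'.pow 2).intervalIntegrable
  have hifh : IntervalIntegrable (fun τ => f τ * h τ) volume c d := (hf'.mul hh').intervalIntegrable
  set A := ∫ τ in c..d, (f τ)^2 with hA
  set Bv := ∫ τ in c..d, f τ * h τ with hB
  set Cv := ∫ τ in c..d, (h τ)^2 with hC
  have hquad : ∀ x : ℝ, 0 ≤ Cv * (x * x) + (-2*Bv) * x + A := by
    intro x
    have hnn : 0 ≤ ∫ τ in c..d, (f τ - x * h τ)^2 :=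
      intervalIntegral.integral_nonneg hcd (fun τ _ => sq_nonneg _)
    have hexp : (∫ τ in c..d, (f τ - x * h τ)^2)
        = A - (2*x)*Bv + (x*x)*Cv := by
      have hcong : (∫ τ in c..d, (f τ - x * h τ)^2)
          = ∫ τ in c..d, ((f τ)^2 - (2*x)*(f τ * h τ) + (x*x)*(h τ)^2) := by
        apply intervalIntegral.integral_congr
        intro τ _
        ring
      rw [hcong, intervalIntegral.integral_add ((hif.sub (hifh.const_mul (2*x))))
        (hih.const_mul (x*x)), intervalIntegral.integral_sub hif (hifh.const_mul (2*x)),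
        intervalIntegral.integral_const_mul, intervalIntegral.integral_const_mul]
    nlinarith [hnn, hexp]
  have hd := discrim_le_zero hquad
  rw [discrim] at hd
  nlinarith [hd]

lemma amgm_combine {X Y F1 F2 Q1 Q2 : ℝ} (hF1 : 0 ≤ F1) (hF2 : 0 ≤ F2)
    (hQ1 : 0 ≤ Q1) (hQ2 : 0 ≤ Q2) (hX : X^2 ≤ F1*Q1) (hY : Y^2 ≤ F2*Q2) :
    (X+Y)^2 ≤ (F1+F2)*(Q1+Q2) := by
  have hprod : X^2*Y^2 ≤ (F1*Q1)*(F2*Q2) :=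
    mul_le_mul hX hY (sq_nonneg Y) (mul_nonneg hF1 hQ1)
  have hS : 0 ≤ F1*Q2 + F2*Q1 := add_nonneg (mul_nonneg hF1 hQ2) (mul_nonneg hF2 hQ1)
  have hXY2 : 2*(X*Y) ≤ F1*Q2 + F2*Q1 := by
    nlinarith [hprod, hS, sq_nonneg (F1*Q2 - F2*Q1), sq_nonneg (X*Y)]
  nlinarith [hX, hY, hXY2]

open Filter in
set_option maxHeartbeats 1000000 in
/-- Nonnegativity of the form `h_b[u] − ∫ V|u|²` on the subspace orthogonal to `√r`:
if `b > 0`, `V ≥ 0` is integrable on `(b, b+1)` with `∫_b^{b+1} V dr ≤ 3`, then for every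
`C¹` function `u` on `[b, b+1]` with `∫_b^{b+1} u(r)√r dr = 0` one has
`∫_b^{b+1} V u² dr ≤ ∫_b^{b+1} ((d/dr)(u(r)·r^(-1/2)))² r dr`. -/
theorem form_nonneg_orthogonal_sqrt (b : ℝ) (hb : 0 < b) (V : ℝ → ℝ)
    (hV : ∀ r ∈ Set.Ioo b (b + 1), 0 ≤ V r)
    (hVint : MeasureTheory.IntegrableOn V (Set.Ioo b (b + 1)))
    (hVsmall : (∫ r in b..(b + 1), V r) ≤ 3)
    (u : ℝ → ℝ) (hu : ContDiffOn ℝ 1 u (Set.Icc b (b + 1)))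
    (hmean : (∫ r in b..(b + 1), u r * Real.sqrt r) = 0) :
    ∫ r in b..(b + 1), V r * u r ^ 2
      ≤ ∫ r in b..(b + 1),
          (derivWithin (fun s : ℝ => u s * s ^ (-(1 / 2) : ℝ)) (Set.Icc b (b + 1)) r) ^ 2
            * r := by
  have hb1 : b < b + 1 := by linarith
  set W : ℝ → ℝ := fun s : ℝ => u s * s ^ (-(1 / 2) : ℝ) with hW
  set G : ℝ → ℝ := derivWithin W (Set.Icc b (b + 1)) with hG
  set F : ℝ := ∫ r in b..(b + 1), G r ^ 2 * r with hF
  have hpos : ∀ τ ∈ Icc b (b+1), (0:ℝ) < τ := fun τ hτ => lt_of_lt_of_le hb hτ.1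
  have hWc : ContDiffOn ℝ 1 W (Icc b (b+1)) := by
    rw [hW]
    exact hu.mul (fun s hs =>
      (Real.contDiffAt_rpow_const_of_ne (ne_of_gt (hpos s hs))).contDiffWithinAt)
  have hGc : ContinuousOn G (Icc b (b+1)) := by
    rw [hG]; exact hWc.continuousOn_derivWithin (uniqueDiffOn_Icc hb1) le_rfl
  have hWcont : ContinuousOn W (Icc b (b+1)) := hWc.continuousOn
  have hGd : ∀ t ∈ Ioo b (b+1), HasDerivAt W (G t) t := by
    intro t ht
    have hmem : Icc b (b+1) ∈ nhds t := Icc_mem_nhds ht.1 ht.2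
    have hd : DifferentiableAt ℝ W t :=
      ((hWc.differentiableOn one_ne_zero) t (Ioo_subset_Icc_self ht)).differentiableAt hmem
    have e : G t = deriv W t := by rw [hG]; exact derivWithin_of_mem_nhds hmem
    rw [e]; exact hd.hasDerivAt
  have hmean' : (∫ τ in b..(b+1), W τ * τ) = 0 := by
    rw [← hmean]
    apply intervalIntegral.integral_congr
    intro τ hτ
    rw [uIcc_of_le hb1.le] at hτ
    have hτ0 : (0:ℝ) < τ := hpos τ hτ
    show W τ * τ = u τ * Real.sqrt τ
    have hWτ : W τ = u τ * τ ^ (-(1/2) : ℝ) := by rw [hW]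
    rw [hWτ, mul_assoc]
    congr 1
    rw [Real.sqrt_eq_rpow, ← Real.rpow_add_one (ne_of_gt hτ0) (-(1/2))]
    norm_num
  have hFnn : (0:ℝ) ≤ F := by
    rw [hF]
    exact intervalIntegral.integral_nonneg hb1.le
      (fun τ hτ => mul_nonneg (sq_nonneg _) (hpos τ hτ).le)
  have hpoint : ∀ t ∈ Ioo b (b+1), (u t)^2 ≤ F/3 := by
    intro t ht
    have htb : b < t := ht.1
    have hta : t < b+1 := ht.2
    have ht0 : (0:ℝ) < t := lt_trans hb htb
    have hIcc1 : Icc b t ⊆ Icc b (b+1) := Icc_subset_Icc le_rfl hta.le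
    have hIcc2 : Icc t (b+1) ⊆ Icc b (b+1) := Icc_subset_Icc htb.le le_rfl
    have hGc1 : ContinuousOn G (Icc b t) := hGc.mono hIcc1
    have hGc2 : ContinuousOn G (Icc t (b+1)) := hGc.mono hIcc2
    have hWc1 : ContinuousOn W (Icc b t) := hWcont.mono hIcc1
    have hWc2 : ContinuousOn W (Icc t (b+1)) := hWcont.mono hIcc2
    have hk1 : ∀ x : ℝ, HasDerivAt (fun τ : ℝ => (τ^2 - b^2)/2) x x := by
      intro x
      have h := ((hasDerivAt_pow 2 x).sub_const (b^2)).div_const 2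
      refine h.congr_deriv ?_
      push_cast; ring
    have hk2 : ∀ x : ℝ, HasDerivAt (fun τ : ℝ => (τ^2 - (b+1)^2)/2) x x := by
      intro x
      have h := ((hasDerivAt_pow 2 x).sub_const ((b+1)^2)).div_const 2
      refine h.congr_deriv ?_
      push_cast; ring
    have hint1 : IntervalIntegrable (fun τ => G τ * ((τ^2 - b^2)/2)) volume b t := by
      apply ContinuousOn.intervalIntegrable
      rw [uIcc_of_le htb.le]; exact hGc1.mul (by fun_prop)
    have hint1' : IntervalIntegrable (fun τ => W τ * τ) volume b t := by
      apply ContinuousOn.intervalIntegrable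
      rw [uIcc_of_le htb.le]; exact hWc1.mul (by fun_prop)
    have hint2 : IntervalIntegrable (fun τ => G τ * ((τ^2 - (b+1)^2)/2)) volume t (b+1) := by
      apply ContinuousOn.intervalIntegrable
      rw [uIcc_of_le hta.le]; exact hGc2.mul (by fun_prop)
    have hint2' : IntervalIntegrable (fun τ => W τ * τ) volume t (b+1) := by
      apply ContinuousOn.intervalIntegrable
      rw [uIcc_of_le hta.le]; exact hWc2.mul (by fun_prop)
    have hIBP1 : (∫ τ in b..t, (G τ * ((τ^2 - b^2)/2) + W τ * τ))
        = W t * ((t^2 - b^2)/2) - W b * ((b^2 - b^2)/2) := by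
      apply intervalIntegral.integral_eq_sub_of_hasDeriv_right_of_le
        (f := fun τ : ℝ => W τ * ((τ^2 - b^2)/2)) htb.le
      · exact hWc1.mul (by fun_prop)
      · intro x hx
        exact ((hGd x ⟨hx.1, lt_trans hx.2 hta⟩).mul (hk1 x)).hasDerivWithinAt
      · exact hint1.add hint1'
    have hIBP2 : (∫ τ in t..(b+1), (G τ * ((τ^2 - (b+1)^2)/2) + W τ * τ))
        = W (b+1) * (((b+1)^2 - (b+1)^2)/2) - W t * ((t^2 - (b+1)^2)/2) := by
      apply intervalIntegral.integral_eq_sub_of_hasDeriv_right_of_le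
        (f := fun τ : ℝ => W τ * ((τ^2 - (b+1)^2)/2)) hta.le
      · exact hWc2.mul (by fun_prop)
      · intro x hx
        exact ((hGd x ⟨lt_trans htb hx.1, hx.2⟩).mul (hk2 x)).hasDerivWithinAt
      · exact hint2.add hint2'
    rw [intervalIntegral.integral_add hint1 hint1'] at hIBP1
    rw [intervalIntegral.integral_add hint2 hint2'] at hIBP2
    have hadj : (∫ τ in b..t, W τ * τ) + (∫ τ in t..(b+1), W τ * τ)
        = ∫ τ in b..(b+1), W τ * τ :=
      intervalIntegral.integral_add_adjacent_intervals hint1' hint2'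
    have hXY : (∫ τ in b..t, G τ * ((τ^2 - b^2)/2))
        + (∫ τ in t..(b+1), G τ * ((τ^2 - (b+1)^2)/2)) = W t * (b+1/2) := by
      have h1 : W t * ((t^2 - b^2)/2) - W t * ((t^2 - (b+1)^2)/2) = W t * (b+1/2) := by ring
      have h2 : W b * ((b^2 - b^2)/2) = 0 := by ring
      have h3 : W (b+1) * (((b+1)^2 - (b+1)^2)/2) = 0 := by ring
      linarith only [hIBP1, hIBP2, hadj, hmean', h1, h2, h3]
    -- Cauchy-Schwarz side 1
    have hsqrtc : ContinuousOn Real.sqrt (Icc b t) := Real.continuous_sqrt.continuousOn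
    have hf1 : ContinuousOn (fun τ => G τ * Real.sqrt τ) (Icc b t) := hGc1.mul hsqrtc
    have hh1 : ContinuousOn (fun τ => ((τ^2 - b^2)/2) / Real.sqrt τ) (Icc b t) :=
      ContinuousOn.div (by fun_prop) hsqrtc
        (fun τ hτ => Real.sqrt_ne_zero'.mpr (hpos τ (hIcc1 hτ)))
    have hcs1 := cs_integral htb.le hf1 hh1
    have e1 : (∫ τ in b..t, (G τ * Real.sqrt τ) * (((τ^2 - b^2)/2) / Real.sqrt τ))
        = ∫ τ in b..t, G τ * ((τ^2 - b^2)/2) := by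
      apply intervalIntegral.integral_congr
      intro τ hτ
      rw [uIcc_of_le htb.le] at hτ
      have h0 : Real.sqrt τ ≠ 0 := Real.sqrt_ne_zero'.mpr (hpos τ (hIcc1 hτ))
      field_simp
    have e2 : (∫ τ in b..t, (G τ * Real.sqrt τ)^2) = ∫ τ in b..t, (G τ)^2 * τ := by
      apply intervalIntegral.integral_congr
      intro τ hτ
      rw [uIcc_of_le htb.le] at hτ
      dsimp only
      rw [mul_pow, Real.sq_sqrt (hpos τ (hIcc1 hτ)).le]
    have e3 : (∫ τ in b..t, (((τ^2 - b^2)/2) / Real.sqrt τ)^2)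
        = ∫ τ in b..t, ((τ^2 - b^2)/2)^2 * (1/τ) := by
      apply intervalIntegral.integral_congr
      intro τ hτ
      rw [uIcc_of_le htb.le] at hτ
      dsimp only
      rw [div_pow, Real.sq_sqrt (hpos τ (hIcc1 hτ)).le, ← mul_one_div]
    rw [e1, e2, e3] at hcs1
    -- Cauchy-Schwarz side 2
    have hsqrtc2 : ContinuousOn Real.sqrt (Icc t (b+1)) := Real.continuous_sqrt.continuousOn
    have hf2 : ContinuousOn (fun τ => G τ * Real.sqrt τ) (Icc t (b+1)) := hGc2.mul hsqrtc2
    have hh2 : ContinuousOn (fun τ => ((τ^2 - (b+1)^2)/2) / Real.sqrt τ) (Icc t (b+1)) :=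
      ContinuousOn.div (by fun_prop) hsqrtc2
        (fun τ hτ => Real.sqrt_ne_zero'.mpr (hpos τ (hIcc2 hτ)))
    have hcs2 := cs_integral hta.le hf2 hh2
    have e1' : (∫ τ in t..(b+1), (G τ * Real.sqrt τ) * (((τ^2 - (b+1)^2)/2) / Real.sqrt τ))
        = ∫ τ in t..(b+1), G τ * ((τ^2 - (b+1)^2)/2) := by
      apply intervalIntegral.integral_congr
      intro τ hτ
      rw [uIcc_of_le hta.le] at hτ
      have h0 : Real.sqrt τ ≠ 0 := Real.sqrt_ne_zero'.mpr (hpos τ (hIcc2 hτ))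
      field_simp
    have e2' : (∫ τ in t..(b+1), (G τ * Real.sqrt τ)^2) = ∫ τ in t..(b+1), (G τ)^2 * τ := by
      apply intervalIntegral.integral_congr
      intro τ hτ
      rw [uIcc_of_le hta.le] at hτ
      dsimp only
      rw [mul_pow, Real.sq_sqrt (hpos τ (hIcc2 hτ)).le]
    have e3' : (∫ τ in t..(b+1), (((τ^2 - (b+1)^2)/2) / Real.sqrt τ)^2)
        = ∫ τ in t..(b+1), ((τ^2 - (b+1)^2)/2)^2 * (1/τ) := by
      apply intervalIntegral.integral_congr
      intro τ hτ
      rw [uIcc_of_le hta.le] at hτ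
      dsimp only
      rw [div_pow, Real.sq_sqrt (hpos τ (hIcc2 hτ)).le, ← mul_one_div]
    rw [e1', e2', e3'] at hcs2
    -- monotone comparison with qq and evaluation
    have hmono1 : (∫ τ in b..t, ((τ^2 - b^2)/2)^2 * (1/τ))
        ≤ ∫ τ in b..t, ((τ^2 - b^2)/2)^2 * qq b τ := by
      apply intervalIntegral.integral_mono_on htb.le
      · apply ContinuousOn.intervalIntegrable
        rw [uIcc_of_le htb.le]
        exact (ContinuousOn.mul (by fun_prop)
          (ContinuousOn.div continuousOn_const continuousOn_id
            (fun τ hτ => ne_of_gt (hpos τ (hIcc1 hτ)))))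
      · apply ContinuousOn.intervalIntegrable
        rw [uIcc_of_le htb.le]
        exact contOn_qq_integrand (fun τ hτ => hpos τ (hIcc1 hτ))
      · intro τ hτ
        exact mul_le_mul_of_nonneg_left (one_div_le_qq hb (hpos τ (hIcc1 hτ))) (sq_nonneg _)
    have hmono2 : (∫ τ in t..(b+1), ((τ^2 - (b+1)^2)/2)^2 * (1/τ))
        ≤ ∫ τ in t..(b+1), ((τ^2 - (b+1)^2)/2)^2 * qq b τ := by
      apply intervalIntegral.integral_mono_on hta.le
      · apply ContinuousOn.intervalIntegrable
        rw [uIcc_of_le hta.le]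
        exact (ContinuousOn.mul (by fun_prop)
          (ContinuousOn.div continuousOn_const continuousOn_id
            (fun τ hτ => ne_of_gt (hpos τ (hIcc2 hτ)))))
      · apply ContinuousOn.intervalIntegrable
        rw [uIcc_of_le hta.le]
        exact contOn_qq_integrand (fun τ hτ => hpos τ (hIcc2 hτ))
      · intro τ hτ
        exact mul_le_mul_of_nonneg_left (one_div_le_qq hb (hpos τ (hIcc2 hτ))) (sq_nonneg _)
    have hval1 : (∫ τ in b..t, ((τ^2 - b^2)/2)^2 * qq b τ) = Phi b b t - Phi b b b :=
      integral_qq_eval hb hb htb.le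
    have hval2 : (∫ τ in t..(b+1), ((τ^2 - (b+1)^2)/2)^2 * qq b τ)
        = Phi b (b+1) (b+1) - Phi b (b+1) t :=
      integral_qq_eval hb ht0 hta.le
    have hF1nn : 0 ≤ ∫ τ in b..t, (G τ)^2 * τ :=
      intervalIntegral.integral_nonneg htb.le
        (fun τ hτ => mul_nonneg (sq_nonneg _) (hpos τ (hIcc1 hτ)).le)
    have hF2nn : 0 ≤ ∫ τ in t..(b+1), (G τ)^2 * τ :=
      intervalIntegral.integral_nonneg hta.le
        (fun τ hτ => mul_nonneg (sq_nonneg _) (hpos τ (hIcc2 hτ)).le)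
    have hQ1nn : 0 ≤ Phi b b t - Phi b b b := by
      rw [← hval1]
      exact intervalIntegral.integral_nonneg htb.le
        (fun τ hτ => mul_nonneg (sq_nonneg _) (qq_nonneg hb (hpos τ (hIcc1 hτ))))
    have hQ2nn : 0 ≤ Phi b (b+1) (b+1) - Phi b (b+1) t := by
      rw [← hval2]
      exact intervalIntegral.integral_nonneg hta.le
        (fun τ hτ => mul_nonneg (sq_nonneg _) (qq_nonneg hb (hpos τ (hIcc2 hτ))))
    set X := ∫ τ in b..t, G τ * ((τ^2 - b^2)/2) with hXdef
    set Y := ∫ τ in t..(b+1), G τ * ((τ^2 - (b+1)^2)/2) with hYdef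
    set F1 := ∫ τ in b..t, (G τ)^2 * τ with hF1def
    set F2 := ∫ τ in t..(b+1), (G τ)^2 * τ with hF2def
    set Q1 := Phi b b t - Phi b b b with hQ1def
    set Q2 := Phi b (b+1) (b+1) - Phi b (b+1) t with hQ2def
    clear_value X Y F1 F2 Q1 Q2
    have hXQ : X^2 ≤ F1 * Q1 :=
      le_trans hcs1 (by
        rw [← hval1]
        exact mul_le_mul_of_nonneg_left hmono1 hF1nn)
    have hYQ : Y^2 ≤ F2 * Q2 :=
      le_trans hcs2 (by
        rw [← hval2]
        exact mul_le_mul_of_nonneg_left hmono2 hF2nn)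
    have hsum2 : (X+Y)^2 ≤ (F1+F2)*(Q1+Q2) :=
      amgm_combine hF1nn hF2nn hQ1nn hQ2nn hXQ hYQ
    have hkey := key_poly hb htb.le hta.le
    rw [← hQ1def, ← hQ2def] at hkey
    have hFsum : F1 + F2 = F := by
      rw [hF1def, hF2def, hF]
      apply intervalIntegral.integral_add_adjacent_intervals
      · apply ContinuousOn.intervalIntegrable
        rw [uIcc_of_le htb.le]; exact (hGc1.pow 2).mul continuousOn_id
      · apply ContinuousOn.intervalIntegrable
        rw [uIcc_of_le hta.le]; exact (hGc2.pow 2).mul continuousOn_id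
    have hmain : (W t)^2*(b+1/2)^2 ≤ F*((b+1/2)^2/(3*t)) := by
      have hWt2 : (W t)^2*(b+1/2)^2 = (X+Y)^2 := by rw [hXY]; ring
      rw [hWt2]
      calc (X+Y)^2 ≤ (F1+F2)*(Q1+Q2) := hsum2
        _ ≤ (F1+F2)*((b+1/2)^2/(3*t)) :=
            mul_le_mul_of_nonneg_left hkey (add_nonneg hF1nn hF2nn)
        _ = F*((b+1/2)^2/(3*t)) := by rw [hFsum]
    have hM2 : (0:ℝ) < (b+1/2)^2 := by positivity
    have hWsq : (W t)^2 ≤ F/(3*t) := by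
      have h' : F*((b+1/2)^2/(3*t)) = (F/(3*t))*(b+1/2)^2 := by ring
      rw [h'] at hmain
      exact le_of_mul_le_mul_right hmain hM2
    have hu2 : (u t)^2 = (W t)^2 * t := by
      have hWτ : W t = u t * t ^ (-(1/2) : ℝ) := by rw [hW]
      have hpow : (t ^ (-(1/2):ℝ))^2 * t = 1 := by
        rw [← Real.rpow_natCast (t ^ (-(1/2):ℝ)) 2, ← Real.rpow_mul ht0.le]
        norm_num
        rw [Real.rpow_neg ht0.le, Real.rpow_one]
        exact inv_mul_cancel₀ (ne_of_gt ht0)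
      rw [hWτ, mul_pow, mul_assoc, hpow, mul_one]
    calc (u t)^2 = (W t)^2*t := hu2
      _ ≤ (F/(3*t))*t := mul_le_mul_of_nonneg_right hWsq ht0.le
      _ = F/3 := by
          rw [div_mul_eq_mul_div, mul_comm 3 t, ← div_div,
            mul_div_cancel_right₀ F (ne_of_gt ht0)]
  -- final integration
  rw [intervalIntegral.integral_of_le hb1.le, ← setIntegral_congr_set Ioo_ae_eq_Ioc]
  have hmeas_u2 : AEStronglyMeasurable (fun x => (u x)^2) (volume.restrict (Ioo b (b+1))) :=
    ((hu.continuousOn.mono Ioo_subset_Icc_self).pow 2).aestronglyMeasurable measurableSet_Ioo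
  obtain ⟨Cb, hCb⟩ := isCompact_Icc.exists_bound_of_continuousOn (hu.continuousOn.pow 2)
  have hVu2int : IntegrableOn (fun x => V x * (u x)^2) (Ioo b (b+1)) := by
    have h1 : IntegrableOn (fun x => (u x)^2 * V x) (Ioo b (b+1)) :=
      Integrable.bdd_mul (c := Cb) hVint hmeas_u2
        ((ae_restrict_iff' measurableSet_Ioo).2
          (Filter.Eventually.of_forall fun x hx => hCb x (Ioo_subset_Icc_self hx)))
    exact h1.congr (Filter.Eventually.of_forall fun x => mul_comm _ _)
  have hVconst : IntegrableOn (fun x => V x * (F/3)) (Ioo b (b+1)) := hVint.mul_const _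
  have hmono := setIntegral_mono_on hVu2int hVconst measurableSet_Ioo
    (fun x hx => mul_le_mul_of_nonneg_left (hpoint x hx) (hV x hx))
  have hVle : (∫ x in Ioo b (b+1), V x) ≤ 3 := by
    rw [setIntegral_congr_set Ioo_ae_eq_Ioc]
    rw [intervalIntegral.integral_of_le hb1.le] at hVsmall
    exact hVsmall
  calc (∫ x in Ioo b (b+1), V x * u x ^ 2)
      ≤ ∫ x in Ioo b (b+1), V x * (F/3) := hmono
    _ = (∫ x in Ioo b (b+1), V x) * (F/3) := integral_mul_const _ _
    _ ≤ 3*(F/3) := mul_le_mul_of_nonneg_right hVle (div_nonneg hFnn (by norm_num))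
    _ = F := by ring
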